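/- Let a, b be real numbers with a > 0 and b > 0, and let ψ(x) := deriv (fun y => Real.log (Real.Gamma y)) x denote the digamma function. Then ∫ x in (0:ℝ)..1, x^a · (1−x)^(b−1) · log x dx = (Γ(a+1)·Γ(b)/Γ(a+b+1)) · (ψ(a+1) − ψ(a+b+1)), where powers are real powers (Real.rpow) and Γ is Real.Gamma. Equivalently, if X ~ Beta(a,b) then E[X·log X] = (a/(a+b))·(ψ(a+1) − ψ(a+b+1)). -/

import Mathlib

open Real MeasureTheory

lemma real_beta_integrable {u v : ℝ} (hu : 0 < u) (hv : 0 < v) :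
    IntervalIntegrable (fun x : ℝ => x ^ (u - 1) * (1 - x) ^ (v - 1)) volume 0 1 := by
  have hc := (Complex.betaIntegral_convergent (u := u) (v := v)
    (by simpa using hu) (by simpa using hv)).norm
  refine hc.congr ?_
  refine fun x hx => ?_
  rw [Set.uIoc_of_le (by norm_num : (0:ℝ) ≤ 1)] at hx
  have h1 : ((x : ℂ)) ^ ((u : ℂ) - 1) = ((x ^ (u - 1) : ℝ) : ℂ) := by
    rw [Complex.ofReal_cpow hx.1.le]; push_cast; ring_nf
  have h2 : ((1 : ℂ) - (x : ℂ)) ^ ((v : ℂ) - 1) = (((1 - x) ^ (v - 1) : ℝ) : ℂ) := by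
    rw [Complex.ofReal_cpow (by linarith [hx.2] : (0:ℝ) ≤ 1 - x)]; push_cast; ring_nf
  simp only [h1, h2, ← Complex.ofReal_mul, Complex.norm_real]
  exact abs_of_nonneg (mul_nonneg (Real.rpow_nonneg hx.1.le _) (Real.rpow_nonneg (by linarith [hx.2]) _))

lemma real_beta_integral {u v : ℝ} (hu : 0 < u) (hv : 0 < v) :
    ∫ x in (0:ℝ)..1, x ^ (u - 1) * (1 - x) ^ (v - 1) =
      Real.Gamma u * Real.Gamma v / Real.Gamma (u + v) := by
  have key := Complex.Gamma_mul_Gamma_eq_betaIntegral (s := (u:ℂ)) (t := (v:ℂ))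
    (by simpa using hu) (by simpa using hv)
  have hint : Complex.betaIntegral u v
      = ((∫ x in (0:ℝ)..1, x ^ (u - 1) * (1 - x) ^ (v - 1) : ℝ) : ℂ) := by
    rw [Complex.betaIntegral, ← intervalIntegral.integral_ofReal]
    refine intervalIntegral.integral_congr fun x hx => ?_
    rw [Set.uIcc_of_le (by norm_num : (0:ℝ) ≤ 1)] at hx
    have h1 : ((x : ℂ)) ^ ((u : ℂ) - 1) = ((x ^ (u - 1) : ℝ) : ℂ) := by
      rw [Complex.ofReal_cpow hx.1]; push_cast; ring_nf
    have h2 : ((1 : ℂ) - (x : ℂ)) ^ ((v : ℂ) - 1) = (((1 - x) ^ (v - 1) : ℝ) : ℂ) := by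
      rw [Complex.ofReal_cpow (by linarith [hx.2] : (0:ℝ) ≤ 1 - x)]; push_cast; ring_nf
    rw [h1, h2, ← Complex.ofReal_mul]
  rw [hint, ← Complex.ofReal_add, Complex.Gamma_ofReal, Complex.Gamma_ofReal,
    Complex.Gamma_ofReal, ← Complex.ofReal_mul, ← Complex.ofReal_mul] at key
  have key' := Complex.ofReal_inj.mp key
  have hΓ : Real.Gamma (u + v) ≠ 0 := (Real.Gamma_pos_of_pos (by linarith)).ne'
  field_simp
  linarith [key']

/-- The digamma function `ψ(x) = (log ∘ Γ)'(x)`. -/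
noncomputable def digamma (x : ℝ) : ℝ := deriv (fun y => Real.log (Real.Gamma y)) x

lemma digamma_eq {x : ℝ} (hx : 0 < x) :
    digamma x = deriv Real.Gamma x / Real.Gamma x := by
  have hd : DifferentiableAt ℝ Real.Gamma x :=
    Real.differentiableAt_Gamma fun m =>
      (((neg_nonpos).mpr (Nat.cast_nonneg m)).trans_lt hx).ne'
  exact (hd.hasDerivAt.log (Real.Gamma_pos_of_pos hx).ne').deriv

/-- Beta-moment identity: for `a, b > 0`,
`∫₀¹ x^a (1−x)^(b−1) log x dx = (Γ(a+1)Γ(b)/Γ(a+b+1)) (ψ(a+1) − ψ(a+b+1))`;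
equivalently, if `X ~ Beta(a,b)` then `E[X log X] = (a/(a+b))(ψ(a+1) − ψ(a+b+1))`. -/
theorem beta_xlogx_moment (a b : ℝ) (ha : 0 < a) (hb : 0 < b) :
    ∫ x in (0:ℝ)..1, x ^ a * (1 - x) ^ (b - 1) * Real.log x =
      (Real.Gamma (a + 1) * Real.Gamma b / Real.Gamma (a + b + 1)) *
        (digamma (a + 1) - digamma (a + b + 1)) := by
  have hΓ1 : (0:ℝ) < Real.Gamma (a + 1) := Real.Gamma_pos_of_pos (by linarith)
  have hΓab : (0:ℝ) < Real.Gamma (a + b + 1) := Real.Gamma_pos_of_pos (by linarith)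
  -- derivative of the parametric integral
  have contF : ∀ (t : ℝ) (x : ℝ), x ∈ Set.Ioo (0:ℝ) 1 →
      ContinuousAt (fun x : ℝ => x ^ t * (1 - x) ^ (b - 1)) x := by
    intro t x hx
    have h1 : ContinuousAt (fun x : ℝ => x ^ t) x :=
      Real.continuousAt_rpow_const x t (Or.inl hx.1.ne')
    have h2 : ContinuousAt (fun x : ℝ => (1 - x) ^ (b - 1)) x := by
      have hne : (1:ℝ) - x ≠ 0 := by have := hx.2; intro h; linarith [sub_eq_zero.mp h]
      exact (Real.continuousAt_rpow_const (1 - x) (b - 1) (Or.inl hne)).comp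
        ((continuous_const.sub continuous_id).continuousAt)
    exact h1.mul h2
  have hrestr : volume.restrict (Set.uIoc (0:ℝ) 1) = volume.restrict (Set.Ioo (0:ℝ) 1) := by
    rw [Set.uIoc_of_le (by norm_num : (0:ℝ) ≤ 1)]
    exact (Measure.restrict_congr_set MeasureTheory.Ioo_ae_eq_Ioc).symm
  have meas : ∀ t : ℝ, AEStronglyMeasurable (fun x : ℝ => x ^ t * (1 - x) ^ (b - 1))
      (volume.restrict (Set.uIoc (0:ℝ) 1)) := by
    intro t
    rw [hrestr]
    exact ContinuousOn.aestronglyMeasurable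
      (fun x hx => (contF t x hx).continuousWithinAt) measurableSet_Ioo
  have hF_int : IntervalIntegrable (fun x : ℝ => x ^ a * (1 - x) ^ (b - 1)) volume 0 1 := by
    simpa using real_beta_integrable (u := a + 1) (v := b) (by linarith) hb
  have bound_int : IntervalIntegrable
      (fun x : ℝ => (4 / a) * (x ^ (a / 4) * (1 - x) ^ (b - 1))) volume 0 1 := by
    have h := real_beta_integrable (u := a / 4 + 1) (v := b) (by linarith) hb
    simpa using h.const_mul (4 / a)
  have main := intervalIntegral.hasDerivAt_integral_of_dominated_loc_of_deriv_le
    (F := fun (t : ℝ) (x : ℝ) => x ^ t * (1 - x) ^ (b - 1))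
    (F' := fun (t : ℝ) (x : ℝ) => x ^ t * (1 - x) ^ (b - 1) * Real.log x)
    (x₀ := a) (s := Metric.ball a (a / 2))
    (bound := fun x : ℝ => (4 / a) * (x ^ (a / 4) * (1 - x) ^ (b - 1)))
    (Metric.ball_mem_nhds a (by positivity))
    (Filter.Eventually.of_forall fun t => meas t)
    hF_int
    (by
      rw [hrestr]
      exact ContinuousOn.aestronglyMeasurable
        (fun x hx => (((contF a x hx).mul
          (Real.continuousAt_log hx.1.ne')).continuousWithinAt)) measurableSet_Ioo)
    ?_ bound_int ?_
  · obtain ⟨-, hF⟩ := main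
    -- derivative of the Gamma side
    have hd1 : HasDerivAt (fun t : ℝ => Real.Gamma (t + 1)) (deriv Real.Gamma (a + 1)) a := by
      have hg : DifferentiableAt ℝ Real.Gamma (a + 1) :=
        Real.differentiableAt_Gamma fun m =>
          (((neg_nonpos).mpr (Nat.cast_nonneg m)).trans_lt (by linarith)).ne'
      simpa [Function.comp_def] using HasDerivAt.comp a hg.hasDerivAt ((hasDerivAt_id a).add_const 1)
    have hd2 : HasDerivAt (fun t : ℝ => Real.Gamma (t + b + 1))
        (deriv Real.Gamma (a + b + 1)) a := by
      have hg : DifferentiableAt ℝ Real.Gamma (a + b + 1) :=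
        Real.differentiableAt_Gamma fun m =>
          (((neg_nonpos).mpr (Nat.cast_nonneg m)).trans_lt (by linarith)).ne'
      have hinner : HasDerivAt (fun t : ℝ => t + b + 1) 1 a := by
        simpa using ((hasDerivAt_id a).add_const b).add_const 1
      simpa [Function.comp_def] using HasDerivAt.comp a hg.hasDerivAt hinner
    have hG : HasDerivAt (fun t : ℝ => Real.Gamma (t + 1) * Real.Gamma b / Real.Gamma (t + b + 1))
        ((deriv Real.Gamma (a + 1) * Real.Gamma b * Real.Gamma (a + b + 1) -
          Real.Gamma (a + 1) * Real.Gamma b * deriv Real.Gamma (a + b + 1)) /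
            Real.Gamma (a + b + 1) ^ 2) a :=
      (hd1.mul_const (Real.Gamma b)).div hd2 hΓab.ne'
    have heq : (fun t : ℝ => ∫ x in (0:ℝ)..1, x ^ t * (1 - x) ^ (b - 1)) =ᶠ[nhds a]
        (fun t : ℝ => Real.Gamma (t + 1) * Real.Gamma b / Real.Gamma (t + b + 1)) := by
      filter_upwards [eventually_gt_nhds ha] with t ht
      have h := real_beta_integral (u := t + 1) (v := b) (by linarith) hb
      simp only [add_sub_cancel_right] at h
      rw [h, show t + 1 + b = t + b + 1 by ring]
    have hF2 := hG.congr_of_eventuallyEq heq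
    have key := hF.unique hF2
    rw [key, digamma_eq (by linarith : (0:ℝ) < a + 1),
      digamma_eq (by linarith : (0:ℝ) < a + b + 1)]
    field_simp
  · -- bound
    refine Filter.Eventually.of_forall fun x hx => ?_
    rw [Set.uIoc_of_le (by norm_num : (0:ℝ) ≤ 1)] at hx
    intro t ht
    have hx0 : 0 < x := hx.1
    have hx1 : x ≤ 1 := hx.2
    have h1x : (0:ℝ) ≤ 1 - x := by linarith
    have htge : a / 2 ≤ t := by
      rw [Metric.mem_ball, Real.dist_eq, abs_sub_lt_iff] at ht
      linarith [ht.2]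
    have hlog : -Real.log x ≤ (4 / a) * x ^ (-(a / 4)) := by
      have h := Real.log_le_sub_one_of_pos (Real.rpow_pos_of_pos hx0 (-(a / 4)))
      rw [Real.log_rpow hx0] at h
      have hxp : (0:ℝ) < x ^ (-(a / 4)) := Real.rpow_pos_of_pos hx0 _
      have h4a : (0:ℝ) < 4 / a := by positivity
      have h2 := mul_le_mul_of_nonneg_left h h4a.le
      rw [show 4 / a * (-(a / 4) * Real.log x) = -Real.log x by field_simp,
        mul_sub] at h2
      linarith
    have hxt : x ^ t ≤ x ^ (a / 2) := Real.rpow_le_rpow_of_exponent_ge hx0 hx1 htge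
    have hlog0 : Real.log x ≤ 0 := Real.log_nonpos hx0.le hx1
    rw [Real.norm_eq_abs, abs_mul, abs_mul, abs_of_nonneg (Real.rpow_nonneg hx0.le _),
      abs_of_nonneg (Real.rpow_nonneg h1x _), abs_of_nonpos hlog0]
    have step : x ^ t * (1 - x) ^ (b - 1) * -Real.log x ≤
        x ^ (a / 2) * (1 - x) ^ (b - 1) * ((4 / a) * x ^ (-(a / 4))) := by
      apply mul_le_mul
      · exact mul_le_mul_of_nonneg_right hxt (Real.rpow_nonneg h1x _)
      · exact hlog
      · linarith
      · positivity
    refine step.trans_eq ?_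
    have hxx : x ^ (a / 2) * x ^ (-(a / 4)) = x ^ (a / 4) := by
      rw [← Real.rpow_add hx0, show a / 2 + -(a / 4) = a / 4 by ring]
    rw [← hxx]; ring
  · -- differentiability
    refine Filter.Eventually.of_forall fun x hx => ?_
    rw [Set.uIoc_of_le (by norm_num : (0:ℝ) ≤ 1)] at hx
    intro t ht
    have := ((Real.hasStrictDerivAt_const_rpow hx.1 t).hasDerivAt).mul_const
      ((1 - x) ^ (b - 1))
    exact this.congr_deriv (by ring)
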